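/- Let k₂, k₆, h₂, h₆ ≥ 0 and k₇ ∈ ℝ satisfy 709/500 − h₆·k₂/exp(k₇) ≥ 0 and 53/50 − h₂·k₆/exp(k₇) ≥ 0. Then the 7×7 matrix with rows (−173/100, 173/100, 0, 0, 0, 0, 0), (227/500, −3151/1000 − h₂·k₂/exp(k₇), 0, 909/1000, 727/1000, 53/50 − h₂·k₆/exp(k₇), h₂), (0, 153/200, −153/200, 0, 0, 0, 0), (0, 47/500, 189/500, −789/1000, 0, 0, 0), (0, 1411/1000, 0, 0, −367/200, 0, 0), (0, 709/500 − h₆·k₂/exp(k₇), 0, 0, 0, −23158/13875 − h₆·k₆/exp(k₇), h₆), (0, k₂, 0, 0, 0, k₆, −exp(k₇)) is a Metzler Hurwitz matrix. -/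

import Mathlib

open Matrix

/-- A real square matrix is Hurwitz if every eigenvalue of its complexification
has negative real part. -/
def IsHurwitz {n : ℕ} (M : Matrix (Fin n) (Fin n) ℝ) : Prop :=
  ∀ μ ∈ spectrum ℂ (M.map (fun x => (x : ℂ))), μ.re < 0

/-- A real square matrix is Metzler if all its off-diagonal entries are nonnegative. -/
def IsMetzler {n : ℕ} (M : Matrix (Fin n) (Fin n) ℝ) : Prop :=
  ∀ i j, i ≠ j → 0 ≤ M i j

set_option maxHeartbeats 1000000 in
theorem insulin_family_metzler_hurwitz
    (k₂ k₆ h₂ h₆ : ℝ) (k₇ : ℝ)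
    (hk₂ : 0 ≤ k₂) (hk₆ : 0 ≤ k₆) (hh₂ : 0 ≤ h₂) (hh₆ : 0 ≤ h₆)
    (hc₁ : 0 ≤ 709/500 - h₆ * k₂ / Real.exp k₇)
    (hc₂ : 0 ≤ 53/50 - h₂ * k₆ / Real.exp k₇) :
    IsMetzler
      !![-173/100,  173/100,                         0,        0,        0,         0,                                  0;
          227/500, -3151/1000 - h₂ * k₂ / Real.exp k₇, 0,      909/1000, 727/1000,  53/50 - h₂ * k₆ / Real.exp k₇,      h₂;
          0,        153/200,                        -153/200,  0,        0,         0,                                  0;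
          0,        47/500,                          189/500, -789/1000, 0,         0,                                  0;
          0,        1411/1000,                       0,        0,       -367/200,   0,                                  0;
          0,        709/500 - h₆ * k₂ / Real.exp k₇, 0,        0,        0,        -23158/13875 - h₆ * k₆ / Real.exp k₇, h₆;
          0,        k₂,                              0,        0,        0,         k₆,                                -Real.exp k₇] ∧
    IsHurwitz
      !![-173/100,  173/100,                         0,        0,        0,         0,                                  0;
          227/500, -3151/1000 - h₂ * k₂ / Real.exp k₇, 0,      909/1000, 727/1000,  53/50 - h₂ * k₆ / Real.exp k₇,      h₂;
          0,        153/200,                        -153/200,  0,        0,         0,                                  0;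
          0,        47/500,                          189/500, -789/1000, 0,         0,                                  0;
          0,        1411/1000,                       0,        0,       -367/200,   0,                                  0;
          0,        709/500 - h₆ * k₂ / Real.exp k₇, 0,        0,        0,        -23158/13875 - h₆ * k₆ / Real.exp k₇, h₆;
          0,        k₂,                              0,        0,        0,         k₆,                                -Real.exp k₇] := by

  have hE : (0:ℝ) < Real.exp k₇ := Real.exp_pos k₇
  set E := Real.exp k₇ with hEdef
  set A : Matrix (Fin 7) (Fin 7) ℝ :=
      !![-173/100,  173/100,                 0,        0,        0,         0,                          0;
          227/500, -3151/1000 - h₂ * k₂ / E, 0,      909/1000, 727/1000,  53/50 - h₂ * k₆ / E,          h₂;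
          0,        153/200,                -153/200,  0,        0,         0,                          0;
          0,        47/500,                  189/500, -789/1000, 0,         0,                          0;
          0,        1411/1000,               0,        0,       -367/200,   0,                          0;
          0,        709/500 - h₆ * k₂ / E,   0,        0,        0,        -23158/13875 - h₆ * k₆ / E,   h₆;
          0,        k₂,                      0,        0,        0,         k₆,                         -E] with hA
  have hMetz : IsMetzler A := by
    intro i j hij
    fin_cases i <;> fin_cases j <;>
      simp only [hA, Matrix.cons_val', Matrix.cons_val_zero, Matrix.cons_val_one,
        Matrix.head_cons, Matrix.head_fin_const, Matrix.empty_val', Matrix.cons_val_fin_one,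
        Matrix.of_apply, Matrix.cons_val_zero', Matrix.cons_val_succ'] at hij ⊢ <;>
      first | exact absurd rfl hij | positivity | linarith
  refine ⟨hMetz, ?_⟩
  intro μ hμ
  have hh : (0:ℝ) < 1 + h₂ + h₆ := by linarith
  set d7 : ℝ := (5*k₂+5*k₆)/E + 1/(2*(1+h₂+h₆)) with hd7
  have hd7pos : 0 < d7 := by positivity
  set d : Fin 7 → ℝ := ![6,5,6,4,4,5,d7] with hd
  have hdpos : ∀ i, 0 < d i := by
    intro i
    fin_cases i <;>
      simp only [hd, Matrix.cons_val_zero, Matrix.cons_val_one, Matrix.head_cons,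
        Matrix.cons_val_zero', Matrix.cons_val_succ'] <;>
      positivity
  have hdne : ∀ i, ((d i : ℝ) : ℂ) ≠ 0 := fun i => by
    exact_mod_cast (hdpos i).ne'
  have hmul₁ : (diagonal (fun i => ((d i : ℝ) : ℂ))) * (diagonal (fun i => ((d i : ℝ) : ℂ))⁻¹) = 1 := by
    rw [diagonal_mul_diagonal]
    ext i j
    rcases eq_or_ne i j with rfl | h
    · simp [mul_inv_cancel₀ (hdne i)]
    · simp [Matrix.diagonal_apply_ne _ h, Matrix.one_apply_ne h]
  have hmul₂ : (diagonal (fun i => ((d i : ℝ) : ℂ))⁻¹) * (diagonal (fun i => ((d i : ℝ) : ℂ))) = 1 := by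
    rw [diagonal_mul_diagonal]
    ext i j
    rcases eq_or_ne i j with rfl | h
    · simp [inv_mul_cancel₀ (hdne i)]
    · simp [Matrix.diagonal_apply_ne _ h, Matrix.one_apply_ne h]
  set u : (Matrix (Fin 7) (Fin 7) ℂ)ˣ :=
    ⟨diagonal (fun i => ((d i : ℝ) : ℂ)), diagonal (fun i => ((d i : ℝ) : ℂ))⁻¹, hmul₁, hmul₂⟩ with hu
  set N : Matrix (Fin 7) (Fin 7) ℂ :=
      (Matrix.of fun i j => (d i)⁻¹ * A i j * d j).map (fun x => (x : ℂ)) with hN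
  have hNeq : N = (↑u⁻¹ : Matrix (Fin 7) (Fin 7) ℂ) * (A.map (fun x => (x : ℂ))) * (↑u : Matrix (Fin 7) (Fin 7) ℂ) := by
    ext i j
    simp only [hN, hu, Units.inv_mk, Units.val_mk, Matrix.mul_diagonal, Matrix.diagonal_mul,
      Matrix.map_apply, Matrix.of_apply, Pi.inv_apply]
    push_cast
    ring
  have hμN : μ ∈ spectrum ℂ N := by
    rw [hNeq, spectrum.units_conjugate']
    exact hμ
  have heig : Module.End.HasEigenvalue (Matrix.toLin' N) μ := by
    have h1 : μ ∈ spectrum ℂ (Matrix.toLinAlgEquiv' N) := by rwa [AlgEquiv.spectrum_eq]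
    exact Module.End.hasEigenvalue_iff_mem_spectrum.mpr h1
  obtain ⟨i, hi⟩ := eigenvalue_mem_ball heig
  rw [Metric.mem_closedBall, Complex.dist_eq] at hi
  have hre : μ.re ≤ (N i i).re + ∑ j ∈ Finset.univ.erase i, ‖N i j‖ := by
    have h2 := Complex.abs_re_le_norm (μ - N i i)
    rw [Complex.sub_re] at h2
    have h3 := abs_le.mp (h2.trans hi)
    linarith [h3.2]
  clear hi hμ hμN heig hNeq
  rw [Finset.sum_erase_eq_sub (Finset.mem_univ _)] at hre
  fin_cases i <;>
    simp only [hN, hA, hd, Fin.sum_univ_succ, Finset.univ_eq_empty, Finset.sum_empty,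
      Matrix.map_apply, Matrix.of_apply, Matrix.cons_val', Matrix.cons_val_zero,
      Matrix.cons_val_one, Matrix.head_cons, Matrix.head_fin_const, Matrix.empty_val',
      Matrix.cons_val_fin_one, Matrix.cons_val_zero', Matrix.cons_val_succ',
      Matrix.cons_val_succ, Complex.ofReal_re, Complex.norm_real, Real.norm_eq_abs] at hre
  all_goals norm_num [abs_of_nonneg] at hre
  -- row 0
  · linarith
  -- row 1
  · rw [abs_of_nonneg hc₂, abs_of_nonneg hh₂, abs_of_nonneg hd7pos.le] at hre
    have key : 1/5 * h₂ * d7 = h₂ * k₂ / E + h₂ * k₆ / E + h₂ / (10 * (1 + h₂ + h₆)) := by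
      rw [hd7]; field_simp; ring
    have hb : h₂ / (10 * (1 + h₂ + h₆)) ≤ 1/10 := by
      rw [div_le_iff₀ (by positivity)]; linarith
    linarith [hre, key, hb]
  -- row 2
  · linarith
  -- row 3
  · linarith
  -- row 4
  · linarith
  -- row 5
  · rw [abs_of_nonneg hc₁, abs_of_nonneg hh₆, abs_of_nonneg hd7pos.le] at hre
    have key : 1/5 * h₆ * d7 = h₆ * k₂ / E + h₆ * k₆ / E + h₆ / (10 * (1 + h₂ + h₆)) := by
      rw [hd7]; field_simp; ring
    have hb : h₆ / (10 * (1 + h₂ + h₆)) ≤ 1/10 := by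
      rw [div_le_iff₀ (by positivity)]; linarith
    linarith [hre, key, hb]
  -- row 6
  · rw [abs_of_nonneg hd7pos.le, abs_of_nonneg hk₂, abs_of_nonneg hk₆,
        show d7⁻¹ * E * d7 = E from by field_simp] at hre
    have hEd7 : E * d7 = 5*k₂ + 5*k₆ + E / (2 * (1 + h₂ + h₆)) := by
      rw [hd7]; field_simp
    have h5 : 5*k₂ + 5*k₆ < E * d7 := by
      rw [hEd7]
      have : 0 < E / (2 * (1 + h₂ + h₆)) := by positivity
      linarith
    have h6 : d7⁻¹ * k₂ * 5 + d7⁻¹ * k₆ * 5 = (5*k₂ + 5*k₆) / d7 := by ring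
    have h7 : (5*k₂ + 5*k₆) / d7 < E := (div_lt_iff₀ hd7pos).mpr h5
    linarith [hre, h6, h7]
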